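/- Let {c_l} be a nonnegative real sequence, and let ρ1, ρ2, γ be positive constants with ρ2 ≥ ρ1. Define τ1 = ρ1 + γ, τ2 = (ρ2 − ρ1)γ, and ν = (τ1 + sqrt(τ1² + 4τ2))/2. Suppose c_1 ≤ ν c_0 and for all l ≥ 1, c_{l+1} ≤ ρ1 c_l + ρ2 Σ_{j=0}^{l−1} γ^{l−j} c_j. If τ1 + τ2 < 1, then ν < 1 and c_l ≤ ν^l c_0 for all l ≥ 0. -/

import Mathlib

theorem stmt0 (c : ℕ → ℝ) (ρ1 ρ2 γ τ1 τ2 ν : ℝ)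
    (hρ1 : 0 < ρ1) (hρ2 : 0 < ρ2) (hγ : 0 < γ) (hρ : ρ1 ≤ ρ2)
    (hc : ∀ l, 0 ≤ c l)
    (hτ1 : τ1 = ρ1 + γ) (hτ2 : τ2 = (ρ2 - ρ1) * γ)
    (hν : ν = (τ1 + Real.sqrt (τ1 ^ 2 + 4 * τ2)) / 2)
    (h1 : c 1 ≤ ν * c 0)
    (hrec : ∀ l, 1 ≤ l →
      c (l + 1) ≤ ρ1 * c l + ρ2 * ∑ j ∈ Finset.range l, γ ^ (l - j) * c j)
    (hlt : τ1 + τ2 < 1) :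
    ν < 1 ∧ ∀ l, c l ≤ ν ^ l * c 0 := by
  subst hτ1 hτ2
  set τ1 : ℝ := ρ1 + γ with hτ1
  set τ2 : ℝ := (ρ2 - ρ1) * γ with hτ2
  have hτ2nn : 0 ≤ τ2 := by rw [hτ2]; nlinarith
  have hτ1pos : 0 < τ1 := by rw [hτ1]; linarith
  set s := Real.sqrt (τ1 ^ 2 + 4 * τ2) with hsdef
  have hsnn : 0 ≤ s := Real.sqrt_nonneg _
  have hs2 : s ^ 2 = τ1 ^ 2 + 4 * τ2 := Real.sq_sqrt (by nlinarith)
  have hsge : τ1 ≤ s := by nlinarith [sq_nonneg (s - τ1), sq_nonneg (s + τ1)]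
  have hντ1 : τ1 ≤ ν := by rw [hν]; linarith
  have hνpos : 0 < ν := lt_of_lt_of_le hτ1pos hντ1
  have hγν : γ < ν := by
    have : γ < τ1 := by rw [hτ1]; linarith
    linarith
  have hνeq : ν ^ 2 = τ1 * ν + τ2 := by rw [hν]; nlinarith [hs2]
  have hν1 : ν < 1 := by
    have hτ1lt : τ1 < 1 := by linarith
    by_contra h
    push_neg at h
    nlinarith [mul_nonneg (sub_nonneg.mpr h) (by linarith : (0:ℝ) ≤ 1 - τ1)]
  -- sum bound
  have hSle : ∀ l : ℕ, (∑ j ∈ Finset.range l, γ ^ (l - j) * ν ^ j) * (ν - γ) ≤ γ * ν ^ l := by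
    intro l
    induction l with
    | zero => simpa using hγ.le
    | succ l ih =>
      have hsplit : (∑ j ∈ Finset.range (l + 1), γ ^ (l + 1 - j) * ν ^ j)
          = γ * (∑ j ∈ Finset.range l, γ ^ (l - j) * ν ^ j) + γ * ν ^ l := by
        rw [Finset.sum_range_succ, Finset.mul_sum]
        congr 1
        · apply Finset.sum_congr rfl
          intro j hj
          have hjl : j < l := Finset.mem_range.mp hj
          have : l + 1 - j = (l - j) + 1 := by omega
          rw [this, pow_succ]
          ring
        · simp
      rw [hsplit]
      have hexp : (γ * (∑ j ∈ Finset.range l, γ ^ (l - j) * ν ^ j) + γ * ν ^ l) * (ν - γ)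
          = γ * ((∑ j ∈ Finset.range l, γ ^ (l - j) * ν ^ j) * (ν - γ)) + γ * ν ^ l * (ν - γ) := by
        ring
      rw [hexp]
      have h2 : γ * ((∑ j ∈ Finset.range l, γ ^ (l - j) * ν ^ j) * (ν - γ))
          ≤ γ * (γ * ν ^ l) := mul_le_mul_of_nonneg_left ih hγ.le
      have h3 : γ * ν ^ (l + 1) = γ * (γ * ν ^ l) + γ * ν ^ l * (ν - γ) := by ring
      linarith
  have key : ∀ l : ℕ, ρ1 * ν ^ l + ρ2 * (∑ j ∈ Finset.range l, γ ^ (l - j) * ν ^ j) ≤ ν ^ (l + 1) := by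
    intro l
    have hS := hSle l
    have hpos : 0 < ν - γ := by linarith
    have hS2 := mul_le_mul_of_nonneg_left hS hρ2.le
    have expand : (ν - γ) * ν ^ (l + 1) = ρ1 * ν ^ (l + 1) + (ρ2 - ρ1) * γ * ν ^ l := by
      rw [hτ1, hτ2] at hνeq
      linear_combination ν ^ l * hνeq
    rw [← mul_le_mul_iff_right₀ hpos, expand]
    nlinarith [hS2, pow_succ ν l]
  refine ⟨hν1, ?_⟩
  have main : ∀ l, ∀ j ≤ l, c j ≤ ν ^ j * c 0 := by
    intro l
    induction l with
    | zero =>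
      intro j hj
      interval_cases j
      simp
    | succ l ih =>
      intro j hj
      rcases Nat.eq_or_lt_of_le hj with h | h
      · subst h
        rcases Nat.eq_zero_or_pos l with hl | hl
        · subst hl; simpa using h1
        · have hr := hrec l hl
          have hsum : (∑ j ∈ Finset.range l, γ ^ (l - j) * c j)
              ≤ (∑ j ∈ Finset.range l, γ ^ (l - j) * ν ^ j) * c 0 := by
            rw [Finset.sum_mul]
            apply Finset.sum_le_sum
            intro j hj'
            have hcj := ih j (Finset.mem_range.mp hj').le
            have hg : (0:ℝ) ≤ γ ^ (l - j) := by positivity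
            calc γ ^ (l - j) * c j ≤ γ ^ (l - j) * (ν ^ j * c 0) :=
                  mul_le_mul_of_nonneg_left hcj hg
              _ = γ ^ (l - j) * ν ^ j * c 0 := by ring
          have hcl := ih l le_rfl
          have hc0 := hc 0
          have hk := key l
          calc c (l + 1) ≤ ρ1 * c l + ρ2 * ∑ j ∈ Finset.range l, γ ^ (l - j) * c j := hr
            _ ≤ ρ1 * (ν ^ l * c 0) + ρ2 * ((∑ j ∈ Finset.range l, γ ^ (l - j) * ν ^ j) * c 0) := by
                have ha := mul_le_mul_of_nonneg_left hsum hρ2.le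
                have hb := mul_le_mul_of_nonneg_left hcl hρ1.le
                linarith
            _ = (ρ1 * ν ^ l + ρ2 * (∑ j ∈ Finset.range l, γ ^ (l - j) * ν ^ j)) * c 0 := by ring
            _ ≤ ν ^ (l + 1) * c 0 := mul_le_mul_of_nonneg_right hk hc0
      · exact ih j (Nat.lt_succ_iff.mp h)
  intro l
  exact main l l le_rfl
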